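/- For A ≥ 0 and B > 0, the function γ ↦ log(1+γ) - γ + (1+γ)*A/(A+B) is concave on γ ≥ 0, its unique stationary point is γ* = A/B, and its value there is log(1 + A/B); moreover for all γ ≥ 0 the function value is at most log(1 + A/B). -/

import Mathlib

private lemma hasDeriv_aux (A B γ : ℝ) (h : (-1:ℝ) < γ) :
    HasDerivAt (fun γ : ℝ => Real.log (1 + γ) - γ + (1 + γ) * A / (A + B))
      (1 / (1 + γ) - 1 + A / (A + B)) γ := by
  have h1 : (1:ℝ) + γ ≠ 0 := by linarith
  have hlog : HasDerivAt (fun x : ℝ => Real.log (1 + x)) (1 / (1 + γ)) γ := by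
    have := ((hasDerivAt_id γ).const_add 1).log h1
    simpa [one_div] using this
  have hlin : HasDerivAt (fun x : ℝ => (1 + x) * A / (A + B)) (A / (A + B)) γ := by
    have := (((hasDerivAt_id γ).const_add 1).mul_const A).div_const (A + B)
    simpa using this
  exact (hlog.sub (hasDerivAt_id γ)).add hlin

theorem dual_transform_concave_stationary_max (A B : ℝ) (hA : 0 ≤ A) (hB : 0 < B) :
    ConcaveOn ℝ (Set.Ici 0)
        (fun γ : ℝ => Real.log (1 + γ) - γ + (1 + γ) * A / (A + B))
      ∧ deriv (fun γ : ℝ => Real.log (1 + γ) - γ + (1 + γ) * A / (A + B)) (A / B) = 0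
      ∧ (∀ γ ∈ Set.Ici (0 : ℝ),
          deriv (fun γ : ℝ => Real.log (1 + γ) - γ + (1 + γ) * A / (A + B)) γ = 0 →
          γ = A / B)
      ∧ Real.log (1 + A / B) - A / B + (1 + A / B) * A / (A + B) = Real.log (1 + A / B)
      ∧ ∀ γ : ℝ, 0 ≤ γ →
          Real.log (1 + γ) - γ + (1 + γ) * A / (A + B) ≤ Real.log (1 + A / B) := by
  have hAB : 0 < A + B := by linarith
  have hABne : A + B ≠ 0 := ne_of_gt hAB
  have hBne : B ≠ 0 := ne_of_gt hB
  refine ⟨?_, ?_, ?_, ?_, ?_⟩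
  · -- concavity
    refine ⟨convex_Ici 0, ?_⟩
    intro x hx y hy a b ha hb hab
    simp only [Set.mem_Ici] at hx hy
    simp only [smul_eq_mul]
    have h1x : (0:ℝ) < 1 + x := by linarith
    have h1y : (0:ℝ) < 1 + y := by linarith
    have hlog := strictConcaveOn_log_Ioi.concaveOn.2
      (Set.mem_Ioi.2 h1x) (Set.mem_Ioi.2 h1y) ha hb hab
    simp only [smul_eq_mul] at hlog
    have heq : a * (1 + x) + b * (1 + y) = 1 + (a * x + b * y) := by
      have : a + b = 1 := hab; nlinarith
    rw [heq] at hlog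
    have hlin : a * (-x + (1 + x) * A / (A + B)) + b * (-y + (1 + y) * A / (A + B))
        = -(a * x + b * y) + (1 + (a * x + b * y)) * A / (A + B) := by
      field_simp
      nlinarith [hab]
    nlinarith [hlog, hlin]
  · -- derivative at A/B is 0
    have hge : 0 ≤ A / B := div_nonneg hA hB.le
    have h := (hasDeriv_aux A B (A / B) (by linarith)).deriv
    rw [h]
    have h1 : (1:ℝ) + A / B = (A + B) / B := by field_simp; ring
    rw [h1]
    field_simp
    ring
  · -- uniqueness of stationary point
    intro γ hγ hd
    simp only [Set.mem_Ici] at hγ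
    have h := (hasDeriv_aux A B γ (by linarith)).deriv
    rw [h] at hd
    have h1 : (1:ℝ) + γ ≠ 0 := by positivity
    field_simp at hd
    field_simp
    nlinarith [hd]
  · -- value at stationary point
    have h1 : (1:ℝ) + A / B = (A + B) / B := by field_simp; ring
    rw [h1]
    field_simp
    ring
  · -- global maximum on Ici 0
    intro γ hγ
    have h1γ : (0:ℝ) < 1 + γ := by linarith
    have h1s : (0:ℝ) < 1 + A / B := by positivity
    have hlog : Real.log (1 + γ) - Real.log (1 + A / B)
        ≤ (1 + γ) / (1 + A / B) - 1 := by
      rw [← Real.log_div (ne_of_gt h1γ) (ne_of_gt h1s)]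
      exact Real.log_le_sub_one_of_pos (by positivity)
    have hrw : (1 + γ) / (1 + A / B) = (1 + γ) * B / (A + B) := by
      rw [div_eq_div_iff (ne_of_gt h1s) hABne]
      field_simp
      ring
    rw [hrw] at hlog
    have : (1 + γ) * B / (A + B) - 1 - γ + (1 + γ) * A / (A + B) = 0 := by
      field_simp
      ring
    linarith
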